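/- lim_{n→∞} log(f_{n+2})/(n log 2) = log φ / log 2, where f_n is the Fibonacci sequence and φ = (1+√5)/2. Equivalently, the fractal dimension I of the language generated by the regular expression (00+1)^+, for which N_n(L) = 2(f_{n+2} − 1), equals log_2 φ. -/

import Mathlib

open Real Filter

lemma fib_lb : ∀ n : ℕ, goldenRatio ^ n ≤ (Nat.fib (n + 2) : ℝ) := by
  intro n
  induction n using Nat.strong_induction_on with
  | _ n ih =>
    match n with
    | 0 => simp
    | 1 =>
      have : (Nat.fib 3 : ℝ) = 2 := by norm_num
      rw [this, pow_one]
      exact goldenRatio_lt_two.le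
    | (m + 2) =>
      have h1 := ih m (by omega)
      have h2 := ih (m + 1) (by omega)
      have hf : Nat.fib (m + 4) = Nat.fib (m + 3) + Nat.fib (m + 2) := by
        rw [Nat.fib_add_two]; exact Nat.add_comm _ _
      have hp : goldenRatio ^ (m + 2) = goldenRatio ^ (m + 1) + goldenRatio ^ m := by
        calc goldenRatio ^ (m + 2) = goldenRatio ^ m * goldenRatio ^ 2 := by ring
          _ = goldenRatio ^ m * (goldenRatio + 1) := by rw [goldenRatio_sq]
          _ = goldenRatio ^ (m + 1) + goldenRatio ^ m := by ring
      have : (m + 2) + 2 = m + 4 := by omega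
      rw [this, hf, hp]
      push_cast
      linarith

lemma fib_ub : ∀ n : ℕ, (Nat.fib (n + 2) : ℝ) ≤ goldenRatio ^ (n + 1) := by
  intro n
  induction n using Nat.strong_induction_on with
  | _ n ih =>
    match n with
    | 0 =>
      simpa using one_lt_goldenRatio.le
    | 1 =>
      have : (Nat.fib 3 : ℝ) = 2 := by norm_num
      rw [this, goldenRatio_sq]
      linarith [one_lt_goldenRatio]
    | (m + 2) =>
      have h1 := ih m (by omega)
      have h2 := ih (m + 1) (by omega)
      have hf : Nat.fib (m + 4) = Nat.fib (m + 3) + Nat.fib (m + 2) := by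
        rw [Nat.fib_add_two]; exact Nat.add_comm _ _
      have hp : goldenRatio ^ (m + 3) = goldenRatio ^ (m + 2) + goldenRatio ^ (m + 1) := by
        calc goldenRatio ^ (m + 3) = goldenRatio ^ (m + 1) * goldenRatio ^ 2 := by ring
          _ = goldenRatio ^ (m + 1) * (goldenRatio + 1) := by rw [goldenRatio_sq]
          _ = goldenRatio ^ (m + 2) + goldenRatio ^ (m + 1) := by ring
      have : (m + 2) + 2 = m + 4 := by omega
      rw [this, hf, hp]
      push_cast
      linarith

/-- The fractal dimension I of the language generated by `(00+1)^+`: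
`N_n(L) = 2 (fib (n+2) - 1)`, and both `log (fib (n+2)) / (n log 2)` and
`log N_n(L) / (n log 2)` tend to `log φ / log 2` with `φ = (1+√5)/2`. -/
theorem stmt_13 :
    Filter.Tendsto
      (fun n : ℕ => Real.log (Nat.fib (n + 2)) / (n * Real.log 2))
      Filter.atTop (nhds (Real.log ((1 + Real.sqrt 5) / 2) / Real.log 2)) ∧
    Filter.Tendsto
      (fun n : ℕ => Real.log (2 * (Nat.fib (n + 2) - 1) : ℕ) / (n * Real.log 2))
      Filter.atTop (nhds (Real.log ((1 + Real.sqrt 5) / 2) / Real.log 2)) := by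
  have hgold : (1 + Real.sqrt 5) / 2 = goldenRatio := rfl
  rw [hgold]
  set c : ℝ := Real.log goldenRatio / Real.log 2 with hc
  have hlog2 : (0 : ℝ) < Real.log 2 := Real.log_pos (by norm_num)
  have hlogφ : (0 : ℝ) < Real.log goldenRatio := Real.log_pos one_lt_goldenRatio
  have hfibpos : ∀ n : ℕ, (0 : ℝ) < (Nat.fib (n + 2) : ℝ) := fun n => by
    have := Nat.fib_pos.mpr (show 0 < n + 2 by omega)
    exact_mod_cast this
  -- bounds on log fib
  have hlow : ∀ n : ℕ, (n : ℝ) * Real.log goldenRatio ≤ Real.log (Nat.fib (n + 2)) := by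
    intro n
    have := Real.log_le_log (by positivity) (fib_lb n)
    rwa [Real.log_pow] at this
  have hhigh : ∀ n : ℕ, Real.log (Nat.fib (n + 2)) ≤ ((n : ℝ) + 1) * Real.log goldenRatio := by
    intro n
    have := Real.log_le_log (hfibpos n) (fib_ub n)
    rw [Real.log_pow] at this
    push_cast at this
    exact this
  -- limit of auxiliary upper function
  have haux : Tendsto (fun n : ℕ => c + (Real.log goldenRatio / Real.log 2) * (1 / (n : ℝ)))
      atTop (nhds c) := by
    have h0 : Tendsto (fun n : ℕ => (1 : ℝ) / n) atTop (nhds 0) :=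
      tendsto_one_div_atTop_nhds_zero_nat
    have := (tendsto_const_nhds (x := c)).add
      ((tendsto_const_nhds (x := Real.log goldenRatio / Real.log 2)).mul h0)
    simpa using this
  have h1 : Tendsto (fun n : ℕ => Real.log (Nat.fib (n + 2)) / (n * Real.log 2))
      atTop (nhds c) := by
    apply tendsto_of_tendsto_of_tendsto_of_le_of_le' (tendsto_const_nhds (x := c)) haux
    · filter_upwards [eventually_ge_atTop 1] with n hn
      have hn' : (0 : ℝ) < n := by exact_mod_cast hn
      have : c = ((n : ℝ) * Real.log goldenRatio) / (n * Real.log 2) := by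
        rw [hc]; field_simp
      rw [this]
      exact div_le_div_of_nonneg_right (hlow n) (by positivity)
    · filter_upwards [eventually_ge_atTop 1] with n hn
      have hn' : (0 : ℝ) < n := by exact_mod_cast hn
      have heq : c + (Real.log goldenRatio / Real.log 2) * (1 / (n : ℝ))
          = (((n : ℝ) + 1) * Real.log goldenRatio) / (n * Real.log 2) := by
        rw [hc]; field_simp
      rw [heq]
      apply div_le_div_of_nonneg_right (hhigh n)
      positivity
  refine ⟨h1, ?_⟩
  -- second part
  have haux2 : Tendsto (fun n : ℕ => (1 : ℝ) / n + Real.log (Nat.fib (n + 2)) / (n * Real.log 2))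
      atTop (nhds c) := by
    have h0 : Tendsto (fun n : ℕ => (1 : ℝ) / n) atTop (nhds 0) :=
      tendsto_one_div_atTop_nhds_zero_nat
    simpa using h0.add h1
  apply tendsto_of_tendsto_of_tendsto_of_le_of_le' h1 haux2
  · filter_upwards [eventually_ge_atTop 1] with n hn
    have hn' : (0 : ℝ) < n := by exact_mod_cast hn
    have hfib2 : 2 ≤ Nat.fib (n + 2) := by
      calc 2 = Nat.fib 3 := rfl
        _ ≤ Nat.fib (n + 2) := Nat.fib_mono (by omega)
    have hNat : Nat.fib (n + 2) ≤ 2 * (Nat.fib (n + 2) - 1) := by omega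
    have hcast : ((Nat.fib (n + 2) : ℕ) : ℝ) ≤ ((2 * (Nat.fib (n + 2) - 1) : ℕ) : ℝ) := by
      exact_mod_cast hNat
    have := Real.log_le_log (hfibpos n) hcast
    apply div_le_div_of_nonneg_right this
    positivity
  · filter_upwards [eventually_ge_atTop 1] with n hn
    have hn' : (0 : ℝ) < n := by exact_mod_cast hn
    have hfib2 : 2 ≤ Nat.fib (n + 2) := by
      calc 2 = Nat.fib 3 := rfl
        _ ≤ Nat.fib (n + 2) := Nat.fib_mono (by omega)
    have hposN : (0 : ℝ) < ((2 * (Nat.fib (n + 2) - 1) : ℕ) : ℝ) := by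
      have : 0 < 2 * (Nat.fib (n + 2) - 1) := by omega
      exact_mod_cast this
    have hle : ((2 * (Nat.fib (n + 2) - 1) : ℕ) : ℝ) ≤ 2 * (Nat.fib (n + 2) : ℝ) := by
      have : (2 * (Nat.fib (n + 2) - 1) : ℕ) ≤ 2 * Nat.fib (n + 2) := by omega
      exact_mod_cast this
    have hlogle : Real.log ((2 * (Nat.fib (n + 2) - 1) : ℕ) : ℝ)
        ≤ Real.log 2 + Real.log (Nat.fib (n + 2)) := by
      have := Real.log_le_log hposN hle
      rwa [Real.log_mul (by norm_num) (ne_of_gt (hfibpos n))] at this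
    calc Real.log ((2 * (Nat.fib (n + 2) - 1) : ℕ) : ℝ) / (n * Real.log 2)
        ≤ (Real.log 2 + Real.log (Nat.fib (n + 2))) / (n * Real.log 2) := by
          apply div_le_div_of_nonneg_right hlogle; positivity
      _ = 1 / n + Real.log (Nat.fib (n + 2)) / (n * Real.log 2) := by
          field_simp
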